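/- arXiv:2403.15540 — 2 statements merged into one kernel-verified Lean document; each statement's English description precedes it below -/
import Mathlib

section
/- For all positive integers n, the sum (1/2^n) * Σ_{k=1}^{n} C(n,k)/k equals 2/n + O(1/n²); precisely, there exists a constant C such that for all n ≥ 1, |(1/2^n) Σ_{k=1}^n C(n,k)/k − 2/n| ≤ C/n². -/
open Finset

noncomputable def fS (n : ℕ) : ℝ := ∑ k ∈ Finset.Icc 1 n, (n.choose k : ℝ) / k

lemma fS_eq (n : ℕ) : fS n = ∑ i ∈ Finset.range n, (n.choose (1 + i) : ℝ) / (1 + i) := by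
  rw [fS, show Finset.Icc 1 n = Finset.Ico 1 (n+1) by rw [Finset.Ico_add_one_right_eq_Icc],
    Finset.sum_Ico_eq_sum_range]
  simp

lemma fS_rec (n : ℕ) : fS (n + 1) = fS n + ((2 : ℝ) ^ (n + 1) - 1) / (n + 1) := by
  rw [fS_eq (n + 1), fS_eq n]
  have h1 : ∀ i ∈ Finset.range (n + 1),
      (((n + 1).choose (1 + i) : ℝ)) / (1 + i)
        = (n.choose (1 + i) : ℝ) / (1 + i) + (n.choose i : ℝ) / (1 + i) := by
    intro i _
    rw [show 1 + i = i + 1 from add_comm 1 i, Nat.choose_succ_succ n i]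
    push_cast
    ring
  rw [Finset.sum_congr rfl h1, Finset.sum_add_distrib]
  have h2 : ∑ i ∈ Finset.range (n + 1), (n.choose (1 + i) : ℝ) / (1 + i)
      = ∑ i ∈ Finset.range n, (n.choose (1 + i) : ℝ) / (1 + i) := by
    rw [Finset.sum_range_succ]
    simp [Nat.choose_eq_zero_of_lt (by omega : n < 1 + n)]
  have h3 : ∀ i ∈ Finset.range (n + 1),
      (n.choose i : ℝ) / (1 + i) = ((n + 1).choose (i + 1) : ℝ) / (n + 1) := by
    intro i _
    have := Nat.add_one_mul_choose_eq n i
    have hc : ((n : ℝ) + 1) * (n.choose i : ℝ) = ((n + 1).choose (i + 1) : ℝ) * (i + 1) := by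
      exact_mod_cast this
    rw [div_eq_div_iff (by positivity) (by positivity)]
    nlinarith [hc]
  rw [Finset.sum_congr rfl h3, h2, ← Finset.sum_div]
  have h4 : ∑ i ∈ Finset.range (n + 1), ((n + 1).choose (i + 1) : ℝ)
      = (2 : ℝ) ^ (n + 1) - 1 := by
    have := Nat.sum_range_choose (n + 1)
    have h5 : ∑ i ∈ Finset.range (n + 2), ((n + 1).choose i : ℝ) = (2 : ℝ) ^ (n + 1) := by
      exact_mod_cast congrArg (Nat.cast : ℕ → ℝ) this
    rw [Finset.sum_range_succ'] at h5
    simp at h5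
    linarith
  rw [h4]

lemma fS_nonneg (n : ℕ) : 0 ≤ fS n := by
  apply Finset.sum_nonneg
  intro k _
  positivity

lemma fS_le (n : ℕ) : fS n ≤ 2 ^ n := by
  have h1 : fS n ≤ ∑ k ∈ Finset.Icc 1 n, (n.choose k : ℝ) := by
    apply Finset.sum_le_sum
    intro k hk
    exact div_le_self (by positivity) (by exact_mod_cast (Finset.mem_Icc.mp hk).1)
  have h2 : ∑ k ∈ Finset.Icc 1 n, (n.choose k : ℝ) ≤ ∑ k ∈ Finset.range (n + 1), (n.choose k : ℝ) := by
    apply Finset.sum_le_sum_of_subset_of_nonneg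
    · intro k hk
      simp only [Finset.mem_Icc] at hk
      simp only [Finset.mem_range]
      omega
    · intro k _ _
      positivity
  have h3 : ∑ k ∈ Finset.range (n + 1), (n.choose k : ℝ) = 2 ^ n := by
    exact_mod_cast congrArg (Nat.cast : ℕ → ℝ) (Nat.sum_range_choose n)
  linarith

lemma key : ∀ n : ℕ, 8 ≤ n → |fS n / 2 ^ n - 2 / n| ≤ 200 / n ^ 2 := by
  intro n hn
  induction n, hn using Nat.le_induction with
  | base =>
      have h1 : fS 8 / 2 ^ 8 ≤ 1 := by
        rw [div_le_one (by positivity)]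
        exact fS_le 8
      have h2 : (0:ℝ) ≤ fS 8 / 2 ^ 8 := div_nonneg (fS_nonneg 8) (by positivity)
      rw [abs_le]
      norm_num
      constructor <;> linarith
  | succ n hn ih =>
      have hx : (8 : ℝ) ≤ (n : ℝ) := by exact_mod_cast hn
      set x : ℝ := (n : ℝ) with hxdef
      have hx0 : (0:ℝ) < x := by linarith
      have hp : (0:ℝ) < (2:ℝ) ^ (n+1) := by positivity
      have hid : fS (n+1) / 2 ^ (n+1) - 2 / ((n:ℝ)+1)
          = (fS n / 2 ^ n - 2 / x) / 2 + 1 / (x * (x + 1)) - 1 / ((x + 1) * 2 ^ (n+1)) := by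
        rw [fS_rec n]
        push_cast
        rw [pow_succ]
        field_simp
        ring
      have hpow : x ≤ (2:ℝ) ^ (n+1) := by
        have h : (x : ℝ) < (2:ℝ) ^ n := by
          rw [hxdef]
          exact_mod_cast Nat.lt_two_pow_self (n := n)
        have h2 : (2:ℝ) ^ n ≤ (2:ℝ) ^ (n+1) := by
          apply pow_le_pow_right₀ (by norm_num) (by omega)
        linarith
      have hb1 : 1 / (x * (x + 1)) ≤ 1 / x ^ 2 := by
        apply one_div_le_one_div_of_le (by positivity)
        nlinarith
      have hb2 : 1 / ((x + 1) * 2 ^ (n+1)) ≤ 1 / x ^ 2 := by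
        apply one_div_le_one_div_of_le (by positivity)
        nlinarith
      have habs : |fS (n+1) / 2 ^ (n+1) - 2 / ((n:ℝ)+1)| ≤ 200 / x ^ 2 / 2 + 1 / x ^ 2 + 1 / x ^ 2 := by
        rw [hid]
        have t1 : |(fS n / 2 ^ n - 2 / x) / 2| ≤ 200 / x ^ 2 / 2 := by
          rw [abs_div, abs_two]
          exact div_le_div_of_nonneg_right ih (by norm_num) |>.trans_eq rfl
        have t2 : |1 / (x * (x + 1))| ≤ 1 / x ^ 2 := by
          rw [abs_of_nonneg (by positivity)]; exact hb1
        have t3 : |1 / ((x + 1) * 2 ^ (n+1))| ≤ 1 / x ^ 2 := by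
          rw [abs_of_nonneg (by positivity)]; exact hb2
        have tri : |(fS n / 2 ^ n - 2 / x) / 2 + 1 / (x * (x + 1)) - 1 / ((x + 1) * 2 ^ (n+1))|
            ≤ |(fS n / 2 ^ n - 2 / x) / 2| + |1 / (x * (x + 1))| + |1 / ((x + 1) * 2 ^ (n+1))| := by
          calc _ ≤ |(fS n / 2 ^ n - 2 / x) / 2 + 1 / (x * (x + 1))| + |1 / ((x + 1) * 2 ^ (n+1))| :=
                abs_sub _ _
            _ ≤ _ := by gcongr; exact abs_add_le _ _
        linarith
      have hfin : 200 / x ^ 2 / 2 + 1 / x ^ 2 + 1 / x ^ 2 ≤ 200 / ((x + 1)) ^ 2 := by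
        have e1 : 200 / x ^ 2 / 2 + 1 / x ^ 2 + 1 / x ^ 2 = 102 / x ^ 2 := by ring
        rw [e1, div_le_div_iff₀ (by positivity) (by positivity)]
        nlinarith
      push_cast
      calc |fS (n+1) / 2 ^ (n+1) - 2 / (x+1)| ≤ 200 / x ^ 2 / 2 + 1 / x ^ 2 + 1 / x ^ 2 := habs
        _ ≤ 200 / (x+1) ^ 2 := hfin

theorem alpha_star_asymptotics :
    ∃ C : ℝ, ∀ n : ℕ, 1 ≤ n →
      |(1 / 2 ^ n) * (∑ k ∈ Finset.Icc 1 n, (n.choose k : ℝ) / k) - 2 / n| ≤ C / n ^ 2 := by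
  use 200
  intro n hn
  have heq : (1 / 2 ^ n : ℝ) * (∑ k ∈ Finset.Icc 1 n, (n.choose k : ℝ) / k) = fS n / 2 ^ n := by
    rw [fS]; ring
  rw [heq]
  by_cases h8 : 8 ≤ n
  · exact key n h8
  · -- 1 ≤ n ≤ 7
    have hx : (1 : ℝ) ≤ (n : ℝ) := by exact_mod_cast hn
    have hx7 : (n : ℝ) ≤ 7 := by exact_mod_cast (by omega : n ≤ 7)
    have h1 : fS n / 2 ^ n ≤ 1 := by
      rw [div_le_one (by positivity)]
      exact fS_le n
    have h2 : (0:ℝ) ≤ fS n / 2 ^ n := div_nonneg (fS_nonneg n) (by positivity)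
    have h3 : 2 / (n:ℝ) ≤ 2 := by
      rw [div_le_iff₀ (by linarith)]
      linarith
    have h4 : (0:ℝ) ≤ 2 / (n:ℝ) := by positivity
    have h5 : (3:ℝ) ≤ 200 / (n:ℝ) ^ 2 := by
      rw [le_div_iff₀ (by positivity)]
      nlinarith
    rw [abs_le]
    constructor <;> linarith
end

section
/- For all positive integers n, (1/2^n) * Σ_{k=1}^{n} C(n,k)/k² = 4/n² + O(1/n³); precisely, there exists a constant C such that for all n ≥ 1, |(1/2^n) Σ_{k=1}^n C(n,k)/k² − 4/n²| ≤ C/n³. -/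
open Finset

lemma binom_shift (n : ℕ) (f : ℕ → ℝ) :
    ∑ k ∈ range (n+2), ((n+1).choose k : ℝ) * f k
      = ∑ k ∈ range (n+1), (n.choose k : ℝ) * (f k + f (k+1)) := by
  have h1 : ∑ k ∈ range (n+2), ((n+1).choose k : ℝ) * f k
      = (∑ k ∈ range (n+1), (((n+1).choose (k+1) : ℕ) : ℝ) * f (k+1)) + ((n+1).choose 0 : ℝ) * f 0 :=
    Finset.sum_range_succ' _ (n+1)
  have h3 : ∑ k ∈ range (n+2), (n.choose k : ℝ) * f k
      = (∑ k ∈ range (n+1), (n.choose (k+1) : ℝ) * f (k+1)) + (n.choose 0 : ℝ) * f 0 :=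
    Finset.sum_range_succ' _ (n+1)
  have h4 : ∑ k ∈ range (n+2), (n.choose k : ℝ) * f k
      = ∑ k ∈ range (n+1), (n.choose k : ℝ) * f k := by
    rw [Finset.sum_range_succ, Nat.choose_succ_self]
    simp
  have h2 : ∑ k ∈ range (n+1), (n.choose (k+1) : ℝ) * f (k+1)
      = (∑ k ∈ range (n+1), (n.choose k : ℝ) * f k) - f 0 := by
    rw [h4] at h3; simp at h3; linarith
  rw [h1]
  have : ∀ k ∈ range (n+1), (((n+1).choose (k+1) : ℕ) : ℝ) * f (k+1)
      = (n.choose k : ℝ) * f (k+1) + (n.choose (k+1) : ℝ) * f (k+1) := by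
    intro k _
    rw [Nat.choose_succ_succ]
    push_cast
    ring
  rw [Finset.sum_congr rfl this, Finset.sum_add_distrib, h2]
  simp [Finset.sum_add_distrib, mul_add]
  ring

lemma sum_choose_real (n : ℕ) : ∑ k ∈ range (n+1), (n.choose k : ℝ) = 2 ^ n := by
  rw [← Nat.cast_sum]
  norm_cast
  exact Nat.sum_range_choose n

lemma moments (n : ℕ) :
    (∑ k ∈ range (n+1), (n.choose k : ℝ) * ((n:ℝ) - 2*k) = 0) ∧
    (∑ k ∈ range (n+1), (n.choose k : ℝ) * ((n:ℝ) - 2*k)^2 = (n:ℝ) * 2^n) ∧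
    (∑ k ∈ range (n+1), (n.choose k : ℝ) * ((n:ℝ) - 2*k)^4 = (3*(n:ℝ)^2 - 2*n) * 2^n) ∧
    (∑ k ∈ range (n+1), (n.choose k : ℝ) * ((n:ℝ) - 2*k)^6
      = (15*(n:ℝ)^3 - 30*(n:ℝ)^2 + 16*n) * 2^n) := by
  induction n with
  | zero => norm_num
  | succ n ih =>
    obtain ⟨ih1, ih2, ih4, ih6⟩ := ih
    have hS0 := sum_choose_real n
    have key : ∀ m : ℕ, ∑ k ∈ range (n+2), ((n+1).choose k : ℝ) * (((n+1:ℕ):ℝ) - 2*k)^m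
        = ∑ k ∈ range (n+1), (n.choose k : ℝ)
            * ((((n:ℝ) - 2*k) + 1)^m + (((n:ℝ) - 2*k) - 1)^m) := by
      intro m
      rw [binom_shift n (fun k => (((n+1:ℕ):ℝ) - 2*k)^m)]
      apply Finset.sum_congr rfl
      intro k _
      push_cast
      ring_nf
    refine ⟨?_, ?_, ?_, ?_⟩
    · rw [show n+1+1 = n+2 from rfl]
      have k1 := key 1
      simp only [pow_one] at k1
      rw [k1]
      have : ∀ k ∈ range (n+1), (n.choose k : ℝ)
          * ((((n:ℝ) - 2*k) + 1) + (((n:ℝ) - 2*k) - 1))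
          = 2 * ((n.choose k : ℝ) * ((n:ℝ) - 2*k)) := by intro k _; ring
      rw [Finset.sum_congr rfl this, ← Finset.mul_sum, ih1]
      ring
    · rw [show n+1+1 = n+2 from rfl, key 2]
      have : ∀ k ∈ range (n+1), (n.choose k : ℝ)
          * ((((n:ℝ) - 2*k) + 1)^2 + (((n:ℝ) - 2*k) - 1)^2)
          = 2 * ((n.choose k : ℝ) * ((n:ℝ) - 2*k)^2) + 2 * (n.choose k : ℝ) := by
        intro k _; ring
      rw [Finset.sum_congr rfl this, Finset.sum_add_distrib, ← Finset.mul_sum, ← Finset.mul_sum,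
        ih2, hS0]
      push_cast
      ring
    · rw [show n+1+1 = n+2 from rfl, key 4]
      have : ∀ k ∈ range (n+1), (n.choose k : ℝ)
          * ((((n:ℝ) - 2*k) + 1)^4 + (((n:ℝ) - 2*k) - 1)^4)
          = 2 * ((n.choose k : ℝ) * ((n:ℝ) - 2*k)^4)
            + 12 * ((n.choose k : ℝ) * ((n:ℝ) - 2*k)^2) + 2 * (n.choose k : ℝ) := by
        intro k _; ring
      rw [Finset.sum_congr rfl this, Finset.sum_add_distrib, Finset.sum_add_distrib,
        ← Finset.mul_sum, ← Finset.mul_sum, ← Finset.mul_sum, ih4, ih2, hS0]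
      push_cast
      ring
    · rw [show n+1+1 = n+2 from rfl, key 6]
      have : ∀ k ∈ range (n+1), (n.choose k : ℝ)
          * ((((n:ℝ) - 2*k) + 1)^6 + (((n:ℝ) - 2*k) - 1)^6)
          = 2 * ((n.choose k : ℝ) * ((n:ℝ) - 2*k)^6)
            + 30 * ((n.choose k : ℝ) * ((n:ℝ) - 2*k)^4)
            + 30 * ((n.choose k : ℝ) * ((n:ℝ) - 2*k)^2) + 2 * (n.choose k : ℝ) := by
        intro k _; ring
      rw [Finset.sum_congr rfl this, Finset.sum_add_distrib, Finset.sum_add_distrib,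
        Finset.sum_add_distrib, ← Finset.mul_sum, ← Finset.mul_sum, ← Finset.mul_sum,
        ← Finset.mul_sum, ih6, ih4, ih2, hS0]
      push_cast
      ring

lemma rbound (N K : ℝ) (hN1 : 1 ≤ N) (hK1 : 1 ≤ K) (hKN : K ≤ N) :
    |1/K^2 - 4/N^2 - 8*(N - 2*K)/N^3| ≤ 80*(N - 2*K)^6/N^6 + 32*(N - 2*K)^2/N^4 := by
  have hN0 : (0:ℝ) < N := by linarith
  have hK0 : (0:ℝ) < K := by linarith
  obtain ⟨x, hx⟩ : ∃ x : ℝ, x = N - 2*K := ⟨_, rfl⟩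
  rw [← hx]
  have hid : 1/K^2 - 4/N^2 - 8*x/N^3 = x^2 * (4*K*N^3 + N^4) / (K^2*N^6) := by
    rw [hx]
    field_simp
    ring
  have hnum : x^2 * (4*K*N^3 + N^4) ≤ 80*x^6*K^2 + 32*x^2*K^2*N^2 := by
    rcases le_or_gt N (4*K) with hc | hc
    · have f1 : 4*K*N^3 + N^4 ≤ 32*K^2*N^2 := by
        nlinarith [mul_nonneg (mul_nonneg hK0.le (sq_nonneg N)) (sub_nonneg.2 hc),
          mul_nonneg (mul_nonneg hN0.le (sq_nonneg N)) (sub_nonneg.2 hc), sq_nonneg (4*K - N)]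
      have f2 : x^2*(4*K*N^3 + N^4) ≤ x^2*(32*K^2*N^2) :=
        mul_le_mul_of_nonneg_left f1 (sq_nonneg x)
      have f3 : (0:ℝ) ≤ 80*x^6*K^2 := by positivity
      nlinarith [f2, f3]
    · have hxN : N/2 ≤ x := by rw [hx]; linarith
      have hx0 : 0 ≤ x := by linarith [hN0]
      have hx2 : N^2/4 ≤ x^2 := by nlinarith
      have hx6 : x^2 * N^4 / 16 ≤ x^6 := by
        nlinarith [mul_nonneg (mul_nonneg (sq_nonneg x) (sub_nonneg.2 hx2))
          (by positivity : (0:ℝ) ≤ x^2 + N^2/4)]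
      have e2 : x^2*(4*K*N^3 + N^4) ≤ 5*x^2*N^4 := by
        nlinarith [mul_nonneg (sq_nonneg x) (mul_nonneg (mul_nonneg hN0.le (sq_nonneg N)) (sub_nonneg.2 hKN))]
      have e3 : 5*x^2*N^4 ≤ 80*x^6 := by linarith
      have e4 : 80*x^6 ≤ 80*x^6*K^2 := by
        nlinarith [mul_nonneg (by positivity : (0:ℝ) ≤ x^6) (by nlinarith : (0:ℝ) ≤ K^2 - 1)]
      have e5 : (0:ℝ) ≤ 32*x^2*K^2*N^2 := by positivity
      linarith
  have hr0 : 0 ≤ x^2 * (4*K*N^3 + N^4) / (K^2*N^6) := by positivity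
  rw [hid, abs_of_nonneg hr0, div_le_iff₀ (by positivity)]
  calc x^2 * (4*K*N^3 + N^4) ≤ 80*x^6*K^2 + 32*x^2*K^2*N^2 := hnum
  _ = (80*x^6/N^6 + 32*x^2/N^4) * (K^2*N^6) := by field_simp

theorem sum_choose_div_sq_asymptotics :
    ∃ C : ℝ, ∀ n : ℕ, 1 ≤ n →
      |(1 / 2 ^ n) * (∑ k ∈ Finset.Icc 1 n, (n.choose k : ℝ) / (k : ℝ) ^ 2) - 4 / n ^ 2| ≤ C / n ^ 3 := by
  use 1324
  intro n hn
  obtain ⟨h1, h2, -, h6⟩ := moments n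
  have hS0 := sum_choose_real n
  set N : ℝ := (n : ℝ) with hNdef
  have hN1 : (1:ℝ) ≤ N := by rw [hNdef]; exact_mod_cast hn
  have hN0 : (0:ℝ) < N := by linarith
  have hP : (0:ℝ) < 2 ^ n := by positivity
  have hN2 : N ≤ 2 ^ n := by
    have := Nat.lt_two_pow_self (n := n)
    calc N ≤ (n:ℝ) := le_refl _
    _ ≤ ((2^n : ℕ) : ℝ) := by exact_mod_cast this.le
    _ = 2 ^ n := by push_cast; ring
  have hins : Finset.range (n+1) = insert 0 (Finset.Icc 1 n) := by
    ext x; simp [Finset.mem_Icc, Nat.lt_succ_iff]; omega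
  have hnot : (0:ℕ) ∉ Finset.Icc 1 n := by simp
  -- split sums
  have hsplit : ∀ f : ℕ → ℝ, ∑ k ∈ range (n+1), f k = f 0 + ∑ k ∈ Finset.Icc 1 n, f k := by
    intro f; rw [hins, Finset.sum_insert hnot]
  set r : ℕ → ℝ := fun k => 1/(k:ℝ)^2 - 4/N^2 - 8*(N - 2*k)/N^3 with hr
  set T : ℝ := ∑ k ∈ Finset.Icc 1 n, (n.choose k : ℝ) / (k : ℝ) ^ 2 with hT
  -- sum of choose over Icc
  have hC1 : ∑ k ∈ Finset.Icc 1 n, (n.choose k : ℝ) = 2^n - 1 := by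
    have := hsplit (fun k => (n.choose k : ℝ))
    rw [hS0] at this
    simp at this
    linarith
  have hL1 : ∑ k ∈ Finset.Icc 1 n, (n.choose k : ℝ) * (N - 2*k) = -N := by
    have := hsplit (fun k => (n.choose k : ℝ) * (N - 2*k))
    rw [h1] at this
    simp at this
    linarith
  -- main decomposition
  have E : T - 4*2^n/N^2 = (∑ k ∈ Finset.Icc 1 n, (n.choose k : ℝ) * r k) - 12/N^2 := by
    have step : ∀ k ∈ Finset.Icc 1 n, (n.choose k : ℝ) / (k:ℝ)^2
        = (n.choose k : ℝ) * r k + (n.choose k : ℝ) * (4/N^2)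
          + ((n.choose k : ℝ) * (N - 2*k)) * (8/N^3) := by
      intro k hk
      simp only [hr]
      ring
    rw [hT, Finset.sum_congr rfl step, Finset.sum_add_distrib, Finset.sum_add_distrib,
      ← Finset.sum_mul, ← Finset.sum_mul, hC1, hL1]
    field_simp
    ring
  -- pointwise bound on r
  have hrb : ∀ k ∈ Finset.Icc 1 n, |r k| ≤ 80*(N - 2*k)^6/N^6 + 32*(N - 2*k)^2/N^4 := by
    intro k hk
    simp only [Finset.mem_Icc] at hk
    have hK1 : (1:ℝ) ≤ (k:ℝ) := by exact_mod_cast hk.1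
    have hKN : (k:ℝ) ≤ N := by rw [hNdef]; exact_mod_cast hk.2
    have := rbound N (k:ℝ) hN1 hK1 hKN
    simpa [hr] using this
  -- bound the r-sum
  have hR : |∑ k ∈ Finset.Icc 1 n, (n.choose k : ℝ) * r k|
      ≤ 80*((15*N^3 - 30*N^2 + 16*N)*2^n)/N^6 + 32*(N*2^n)/N^4 := by
    calc |∑ k ∈ Finset.Icc 1 n, (n.choose k : ℝ) * r k|
        ≤ ∑ k ∈ Finset.Icc 1 n, |(n.choose k : ℝ) * r k| := Finset.abs_sum_le_sum_abs _ _
    _ ≤ ∑ k ∈ Finset.Icc 1 n, (n.choose k : ℝ) * (80*(N - 2*k)^6/N^6 + 32*(N - 2*k)^2/N^4) := by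
        apply Finset.sum_le_sum
        intro k hk
        rw [abs_mul, abs_of_nonneg (by positivity : (0:ℝ) ≤ (n.choose k : ℝ))]
        exact mul_le_mul_of_nonneg_left (hrb k hk) (by positivity)
    _ ≤ ∑ k ∈ range (n+1), (n.choose k : ℝ) * (80*(N - 2*k)^6/N^6 + 32*(N - 2*k)^2/N^4) := by
        apply Finset.sum_le_sum_of_subset_of_nonneg
        · intro x hx
          simp only [Finset.mem_Icc, Finset.mem_range, Nat.lt_succ_iff] at *
          omega
        · intro i _ _
          positivity
    _ = 80*(∑ k ∈ range (n+1), (n.choose k : ℝ) * (N - 2*k)^6)/N^6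
          + 32*(∑ k ∈ range (n+1), (n.choose k : ℝ) * (N - 2*k)^2)/N^4 := by
        rw [Finset.mul_sum, Finset.mul_sum, Finset.sum_div, Finset.sum_div, ← Finset.sum_add_distrib]
        apply Finset.sum_congr rfl
        intro k _
        ring
    _ = 80*((15*N^3 - 30*N^2 + 16*N)*2^n)/N^6 + 32*(N*2^n)/N^4 := by rw [h6, h2]
  -- final numeric bound
  have hTb : |T - 4*2^n/N^2| ≤ 1324 * 2^n / N^3 := by
    rw [E]
    have b1 : 80*((15*N^3 - 30*N^2 + 16*N)*2^n)/N^6 ≤ 1280 * 2^n / N^3 := by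
      rw [div_le_div_iff₀ (by positivity) (by positivity)]
      have h45 : N^4 ≤ N^5 := by
        nlinarith [mul_nonneg (pow_pos hN0 4).le (sub_nonneg.2 hN1)]
      have hpoly : 80*(15*N^3 - 30*N^2 + 16*N)*N^3 ≤ 1280*N^6 := by
        nlinarith [pow_pos hN0 6, h45]
      calc 80*((15*N^3 - 30*N^2 + 16*N)*2^n)*N^3
          = (80*(15*N^3 - 30*N^2 + 16*N)*N^3) * 2^n := by ring
      _ ≤ (1280*N^6) * 2^n := mul_le_mul_of_nonneg_right hpoly hP.le
      _ = 1280 * 2^n * N^6 := by ring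
    have b2 : 32*(N*2^n)/N^4 = 32 * 2^n / N^3 := by
      field_simp
    have b3 : 12/N^2 ≤ 12 * 2^n / N^3 := by
      rw [div_le_div_iff₀ (by positivity) (by positivity)]
      nlinarith [pow_pos hN0 2]
    calc |(∑ k ∈ Finset.Icc 1 n, (n.choose k : ℝ) * r k) - 12/N^2|
        ≤ |∑ k ∈ Finset.Icc 1 n, (n.choose k : ℝ) * r k| + |12/N^2| := abs_sub _ _
    _ ≤ (80*((15*N^3 - 30*N^2 + 16*N)*2^n)/N^6 + 32*(N*2^n)/N^4) + 12/N^2 := by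
        rw [abs_of_nonneg (by positivity : (0:ℝ) ≤ 12/N^2)]
        linarith [hR]
    _ ≤ 1280 * 2^n / N^3 + 32 * 2^n / N^3 + 12 * 2^n / N^3 := by
        rw [b2] at *
        linarith [b1, b3]
    _ = 1324 * 2^n / N^3 := by ring
  -- conclude
  have key : (1 / 2 ^ n) * T - 4 / N^2 = (T - 4*2^n/N^2) / 2^n := by
    field_simp
  rw [key, abs_div, abs_of_pos hP, div_le_div_iff₀ hP (by positivity)]
  calc |T - 4*2^n/N^2| * N^3 ≤ (1324 * 2^n / N^3) * N^3 := by
        apply mul_le_mul_of_nonneg_right hTb (by positivity)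
  _ = 1324 * 2^n := by field_simp
end
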